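/- Let F : Ω → H be a V-controlled integral frame on a finite-dimensional Hilbert space H with controlled frame operator S_{VF}, where V is invertible and S_{VF} = V S_F. Then F is a continuous frame for H with frame operator S_F = V^{-1} S_{VF}, and every f ∈ H satisfies the reconstruction formula f = ∫_Ω ⟨f, (S_F^{-1})* F(ς)⟩ F(ς) dμ(ς) (weakly). -/

import Mathlib

open MeasureTheory

local notation "⟪" x ", " y "⟫" => @inner ℂ _ _ x y

set_option maxHeartbeats 1000000 in
set_option synthInstance.maxHeartbeats 400000 in
theorem controlled_frame_is_continuous_frame_with_reconstruction
    {H Ω : Type*} [NormedAddCommGroup H] [InnerProductSpace ℂ H]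
    [FiniteDimensional ℂ H] [MeasurableSpace Ω] (μ : Measure Ω)
    (F : Ω → H) (V SF SVF : H →L[ℂ] H) (hVu : IsUnit V)
    (hSFweak : ∀ f g : H, ⟪SF f, g⟫ = ∫ ς, ⟪f, F ς⟫ * ⟪F ς, g⟫ ∂μ)
    (hSVFweak : ∀ f g : H, ⟪SVF f, g⟫ = ∫ ς, ⟪f, F ς⟫ * ⟪V (F ς), g⟫ ∂μ)
    (hcomp : SVF = V ∘L SF)
    (hSVFpos : ∀ f : H, 0 ≤ (⟪SVF f, f⟫).re) (hSVFu : IsUnit SVF) :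
    -- F is a continuous frame for H
    (∃ A B : ℝ, 0 < A ∧ A ≤ B ∧ ∀ f : H,
        A * ‖f‖ ^ 2 ≤ ∫ ς, ‖⟪f, F ς⟫‖ ^ 2 ∂μ ∧
        ∫ ς, ‖⟪f, F ς⟫‖ ^ 2 ∂μ ≤ B * ‖f‖ ^ 2) ∧
    -- with invertible frame operator S_F = V⁻¹ S_{VF}
    IsUnit SF ∧ SF = (hVu.unit⁻¹ : (H →L[ℂ] H)ˣ) ∘L SVF ∧
    -- reconstruction formula, weakly
    (∀ SFinv : H →L[ℂ] H, SF ∘L SFinv = 1 → SFinv ∘L SF = 1 →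
      ∀ f g : H, ⟪f, g⟫ =
        ∫ ς, ⟪f, (ContinuousLinearMap.adjoint SFinv) (F ς)⟫ * ⟪F ς, g⟫ ∂μ) := by
  -- SF = V⁻¹ ∘ SVF
  have hSFeq : SF = (hVu.unit⁻¹ : (H →L[ℂ] H)ˣ) ∘L SVF := by
    have h2 : (V : H →L[ℂ] H) * SF = (hVu.unit : H →L[ℂ] H) * SF := by
      rw [hVu.unit_spec]
    rw [hcomp]
    change SF = ↑hVu.unit⁻¹ * (V * SF)
    rw [h2, ← mul_assoc, Units.inv_mul, one_mul]
  have hSFu : IsUnit SF := by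
    rw [hSFeq]
    exact (hVu.unit⁻¹ : (H →L[ℂ] H)ˣ).isUnit.mul hSVFu
  -- quadratic form equals integral of squared norms
  have hqc : ∀ f : H, ⟪SF f, f⟫ = ((∫ ς, ‖⟪f, F ς⟫‖ ^ 2 ∂μ : ℝ) : ℂ) := by
    intro f
    rw [hSFweak f f]
    calc ∫ ς, ⟪f, F ς⟫ * ⟪F ς, f⟫ ∂μ
        = ∫ ς, ((‖⟪f, F ς⟫‖ ^ 2 : ℝ) : ℂ) ∂μ := by
          congr 1
          ext ς
          rw [← inner_conj_symm (F ς) f, Complex.mul_conj']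
          norm_cast
      _ = ((∫ ς, ‖⟪f, F ς⟫‖ ^ 2 ∂μ : ℝ) : ℂ) := integral_ofReal
  have hqre : ∀ f : H, (⟪SF f, f⟫).re = ∫ ς, ‖⟪f, F ς⟫‖ ^ 2 ∂μ := by
    intro f; rw [hqc f, Complex.ofReal_re]
  have hqnn : ∀ f : H, 0 ≤ (⟪SF f, f⟫).re := by
    intro f
    rw [hqre f]
    exact integral_nonneg fun ς => sq_nonneg _
  -- self-adjointness
  have hsa : ∀ f g : H, ⟪SF g, f⟫ = (starRingEnd ℂ) ⟪SF f, g⟫ := by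
    intro f g
    rw [hSFweak, hSFweak, ← integral_conj]
    congr 1
    ext ς
    rw [map_mul, ← inner_conj_symm (F ς) f, ← inner_conj_symm g (F ς)]
    ring
  -- expansion inequality
  have hexp : ∀ (f g : H) (t : ℝ), 0 ≤ (⟪SF f, f⟫).re + 2 * t * (⟪SF f, g⟫).re
      + t ^ 2 * (⟪SF g, g⟫).re := by
    intro f g t
    have h0 := hqnn (f + (t : ℂ) • g)
    have hre : (⟪SF (f + (t : ℂ) • g), f + (t : ℂ) • g⟫).re =
        (⟪SF f, f⟫).re + 2 * t * (⟪SF f, g⟫).re + t ^ 2 * (⟪SF g, g⟫).re := by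
      have hthis : ⟪SF (f + (t : ℂ) • g), f + (t : ℂ) • g⟫ =
          ⟪SF f, f⟫ + (t : ℂ) * ⟪SF f, g⟫ + (t : ℂ) * ⟪SF g, f⟫
            + ((t * t : ℝ) : ℂ) * ⟪SF g, g⟫ := by
        simp only [map_add, ContinuousLinearMap.map_smul, inner_add_left, inner_add_right,
          inner_smul_left, inner_smul_right, Complex.conj_ofReal]
        push_cast
        ring
      rw [hthis, hsa f g]
      simp only [Complex.add_re, Complex.mul_re, Complex.ofReal_re, Complex.ofReal_im,
        Complex.conj_re, Complex.conj_im]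
      ring
    rw [hre] at h0
    exact h0
  -- inverse of SF
  have hmul : (↑hSFu.unit⁻¹ : H →L[ℂ] H) * SF = 1 := by
    have h2 : (↑hSFu.unit⁻¹ : H →L[ℂ] H) * SF =
        (↑hSFu.unit⁻¹ : H →L[ℂ] H) * ↑hSFu.unit := by rw [hSFu.unit_spec]
    rw [h2, Units.inv_mul]
  have hSFi_SF : ∀ f : H, (↑hSFu.unit⁻¹ : H →L[ℂ] H) (SF f) = f := by
    intro f
    rw [← ContinuousLinearMap.mul_apply, hmul, ContinuousLinearMap.one_apply]
  have hSFinj : ∀ f : H, SF f = 0 → f = 0 := by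
    intro f hf
    have h := hSFi_SF f
    rw [hf] at h
    simpa using h.symm
  have hre_le : ∀ x y : H, (⟪x, y⟫).re ≤ ‖x‖ * ‖y‖ := by
    intro x y
    calc (⟪x, y⟫).re ≤ ‖⟪x, y⟫‖ := Complex.re_le_norm _
      _ ≤ ‖x‖ * ‖y‖ := norm_inner_le_norm _ _
  set N : ℝ := ‖(↑hSFu.unit⁻¹ : H →L[ℂ] H)‖ with hN
  have hNnn : 0 ≤ N := norm_nonneg _
  set A : ℝ := 1 / ((‖SF‖ + 1) * (N + 1) ^ 2) with hA
  have hSFn1 : (0:ℝ) < ‖SF‖ + 1 := by positivity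
  have hNn1 : (0:ℝ) < N + 1 := by positivity
  have hApos : 0 < A := by positivity
  have hAle1 : A ≤ 1 := by
    rw [hA, div_le_one (by positivity)]
    nlinarith [norm_nonneg SF]
  -- coercivity
  have hqlb : ∀ f : H, SF f ≠ 0 → ‖SF f‖ ^ 2 / (‖SF‖ + 1) ≤ (⟪SF f, f⟫).re := by
    intro f hn
    have hn' : (0:ℝ) < ‖SF f‖ := norm_pos_iff.mpr hn
    have hr : (⟪SF f, SF f⟫).re = ‖SF f‖ ^ 2 := by
      rw [inner_self_eq_norm_sq_to_K (𝕜 := ℂ)]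
      norm_cast
    have hqn : 0 ≤ (⟪SF f, f⟫).re := hqnn f
    have hcn : 0 ≤ (⟪SF (SF f), SF f⟫).re := hqnn (SF f)
    have hcub : (⟪SF (SF f), SF f⟫).re ≤ (‖SF‖ + 1) * ‖SF f‖ ^ 2 := by
      have h1 : (⟪SF (SF f), SF f⟫).re ≤ ‖SF (SF f)‖ * ‖SF f‖ := hre_le _ _
      have h2 : ‖SF (SF f)‖ ≤ ‖SF‖ * ‖SF f‖ := SF.le_opNorm _
      nlinarith [norm_nonneg (SF f), norm_nonneg SF]
    have hcs : ‖SF f‖ ^ 4 ≤ (⟪SF f, f⟫).re * (⟪SF (SF f), SF f⟫).re := by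
      by_cases hc0 : (⟪SF (SF f), SF f⟫).re = 0
      · exfalso
        have h := hexp f (SF f) (-((⟪SF f, f⟫).re + 1) / (2 * ‖SF f‖ ^ 2))
        rw [hr, hc0] at h
        have hpos : (0:ℝ) < ‖SF f‖ ^ 2 := by positivity
        have heq : 2 * (-((⟪SF f, f⟫).re + 1) / (2 * ‖SF f‖ ^ 2)) * ‖SF f‖ ^ 2 =
            -((⟪SF f, f⟫).re + 1) := by
          have hne2 : ‖SF f‖ ^ 2 ≠ 0 := by positivity
          field_simp
        rw [heq] at h
        nlinarith [h]
      · have hcpos : 0 < (⟪SF (SF f), SF f⟫).re := lt_of_le_of_ne hcn (Ne.symm hc0)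
        have h := hexp f (SF f) (-(‖SF f‖ ^ 2) / (⟪SF (SF f), SF f⟫).re)
        rw [hr] at h
        have hne : (⟪SF (SF f), SF f⟫).re ≠ 0 := ne_of_gt hcpos
        have key : 2 * (-(‖SF f‖ ^ 2) / (⟪SF (SF f), SF f⟫).re) * ‖SF f‖ ^ 2
            + (-(‖SF f‖ ^ 2) / (⟪SF (SF f), SF f⟫).re) ^ 2 * (⟪SF (SF f), SF f⟫).re =
            -(‖SF f‖ ^ 2 * ‖SF f‖ ^ 2 / (⟪SF (SF f), SF f⟫).re) := by
          field_simp
          ring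
        have h' : 0 ≤ (⟪SF f, f⟫).re - ‖SF f‖ ^ 2 * ‖SF f‖ ^ 2 / (⟪SF (SF f), SF f⟫).re := by
          nlinarith [h, key]
        have h'' : ‖SF f‖ ^ 2 * ‖SF f‖ ^ 2 / (⟪SF (SF f), SF f⟫).re ≤ (⟪SF f, f⟫).re := by
          linarith
        have := (div_le_iff₀ hcpos).mp h''
        nlinarith [this]
    rw [div_le_iff₀ hSFn1]
    have hprod : (⟪SF f, f⟫).re * (⟪SF (SF f), SF f⟫).re ≤
        (⟪SF f, f⟫).re * ((‖SF‖ + 1) * ‖SF f‖ ^ 2) :=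
      mul_le_mul_of_nonneg_left hcub hqn
    have h4 : ‖SF f‖ ^ 4 ≤ (⟪SF f, f⟫).re * ((‖SF‖ + 1) * ‖SF f‖ ^ 2) := le_trans hcs hprod
    have hsq : (0:ℝ) < ‖SF f‖ ^ 2 := by positivity
    nlinarith [h4, hsq, hqn]
  have hlow : ∀ f : H, A * ‖f‖ ^ 2 ≤ (⟪SF f, f⟫).re := by
    intro f
    by_cases hf : f = 0
    · simp [hf, hqnn]
    · have hn : SF f ≠ 0 := fun h => hf (hSFinj f h)
      have hn' : (0:ℝ) < ‖SF f‖ := norm_pos_iff.mpr hn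
      have hfb : ‖f‖ ≤ (N + 1) * ‖SF f‖ := by
        calc ‖f‖ = ‖(↑hSFu.unit⁻¹ : H →L[ℂ] H) (SF f)‖ := by rw [hSFi_SF]
          _ ≤ N * ‖SF f‖ := (↑hSFu.unit⁻¹ : H →L[ℂ] H).le_opNorm _
          _ ≤ (N + 1) * ‖SF f‖ := by nlinarith
      have hfb2 : ‖f‖ ^ 2 ≤ (N + 1) ^ 2 * ‖SF f‖ ^ 2 := by
        nlinarith [norm_nonneg f, hfb]
      have step1 : A * ‖f‖ ^ 2 ≤ A * ((N + 1) ^ 2 * ‖SF f‖ ^ 2) :=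
        mul_le_mul_of_nonneg_left hfb2 (le_of_lt hApos)
      have step2 : A * ((N + 1) ^ 2 * ‖SF f‖ ^ 2) = ‖SF f‖ ^ 2 / (‖SF‖ + 1) := by
        rw [hA]
        field_simp
      calc A * ‖f‖ ^ 2 ≤ A * ((N + 1) ^ 2 * ‖SF f‖ ^ 2) := step1
        _ = ‖SF f‖ ^ 2 / (‖SF‖ + 1) := step2
        _ ≤ (⟪SF f, f⟫).re := hqlb f hn
  refine ⟨⟨A, ‖SF‖ + 1, hApos, le_trans hAle1 (by nlinarith [norm_nonneg SF]), ?_⟩,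
    hSFu, hSFeq, ?_⟩
  · intro f
    constructor
    · rw [← hqre f]; exact hlow f
    · rw [← hqre f]
      calc (⟪SF f, f⟫).re ≤ ‖SF f‖ * ‖f‖ := hre_le _ _
        _ ≤ ‖SF‖ * ‖f‖ * ‖f‖ := by
            have := SF.le_opNorm f
            nlinarith [norm_nonneg f]
        _ ≤ (‖SF‖ + 1) * ‖f‖ ^ 2 := by nlinarith [norm_nonneg f]
  · intro SFinv h1 h2 f g
    have hfix : SF (SFinv f) = f := by
      calc SF (SFinv f) = (SF ∘L SFinv) f := rfl
        _ = f := by rw [h1]; rfl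
    calc ⟪f, g⟫ = ⟪SF (SFinv f), g⟫ := by rw [hfix]
      _ = ∫ ς, ⟪SFinv f, F ς⟫ * ⟪F ς, g⟫ ∂μ := hSFweak _ _
      _ = ∫ ς, ⟪f, (ContinuousLinearMap.adjoint SFinv) (F ς)⟫ * ⟪F ς, g⟫ ∂μ := by
          congr 1; ext ς
          rw [ContinuousLinearMap.adjoint_inner_right]
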